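/- There exist arbitrarily large harmonic group actions on graphs of genus 0 and of genus 1. Precisely: (a) every finite group Γ acts harmonically on some tree (for instance, the tree obtained by joining |Γ| copies of a fixed rooted tree with at least one edge at their roots, with Γ permuting the copies by the left-regular representation); and (b) for every n ≥ 3 the dihedral group D_n of order 2n acts harmonically on a graph of genus 1 (an n-cycle decorated with two copies of a fixed nonempty rooted tree at each vertex). -/

import Mathlib

open scoped Classical

/-- A finite connected multigraph without loop edges. -/
structure Multigraph where
  V : Type
  E : Type
  [fintypeV : Fintype V]
  [fintypeE : Fintype E]
  ends : E → Sym2 V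
  loopless : ∀ e : E, ¬ (ends e).IsDiag
  connected : (SimpleGraph.fromRel fun x y : V => ∃ e : E, ends e = s(x, y)).Connected

attribute [instance] Multigraph.fintypeV Multigraph.fintypeE

namespace Multigraph

/-- The genus (first Betti number, cyclomatic number) of a multigraph. -/
def genus (G : Multigraph) : ℤ :=
  (Fintype.card G.E : ℤ) - (Fintype.card G.V : ℤ) + 1

/-- A cycle in a multigraph, given as a nonempty set of edges such that every vertex is
incident to either 0 or 2 of its edges. -/
def IsCycleSet (G : Multigraph) (C : Set G.E) : Prop :=
  C.Nonempty ∧ ∀ x : G.V,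
    Nat.card {e : G.E // e ∈ C ∧ x ∈ G.ends e} = 0 ∨
    Nat.card {e : G.E // e ∈ C ∧ x ∈ G.ends e} = 2

end Multigraph

/-- A morphism of multigraphs: vertices go to vertices, and each edge goes either to an
edge joining the images of its endpoints, or to the common image of its endpoints
(in which case the edge is *vertical*). -/
structure Morphism (G G' : Multigraph) where
  vmap : G.V → G'.V
  emap : G.E → G'.E ⊕ G'.V
  compat : ∀ e : G.E,
    (∀ e', emap e = Sum.inl e' → G'.ends e' = (G.ends e).map vmap) ∧
    (∀ v, emap e = Sum.inr v → (G.ends e).map vmap = Sym2.diag v)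

namespace Morphism

/-- A morphism is harmonic if for every vertex `x`, the number of edges incident to `x`
mapping to a given edge `e'` incident to `φ(x)` is independent of the choice of `e'`. -/
def Harmonic {G G' : Multigraph} (φ : Morphism G G') : Prop :=
  ∀ (x : G.V) (e₁ e₂ : G'.E), φ.vmap x ∈ G'.ends e₁ → φ.vmap x ∈ G'.ends e₂ →
    Nat.card {e : G.E // x ∈ G.ends e ∧ φ.emap e = Sum.inl e₁} =
    Nat.card {e : G.E // x ∈ G.ends e ∧ φ.emap e = Sum.inl e₂}

/-- A morphism is nonconstant if its image is not a single vertex. -/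
def Nonconstant {G G' : Multigraph} (φ : Morphism G G') : Prop :=
  ∃ x y : G.V, φ.vmap x ≠ φ.vmap y

/-- Composition of morphisms of multigraphs. -/
def comp {G₁ G₂ G₃ : Multigraph} (ψ : Morphism G₂ G₃) (φ : Morphism G₁ G₂) :
    Morphism G₁ G₃ where
  vmap := ψ.vmap ∘ φ.vmap
  emap e := Sum.elim ψ.emap (fun v => Sum.inr (ψ.vmap v)) (φ.emap e)
  compat e := by
    constructor
    · intro e'' h
      rcases hφ : φ.emap e with e' | v
      · simp only [hφ, Sum.elim_inl] at h
        have h1 := (φ.compat e).1 e' hφ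
        have h2 := (ψ.compat e').1 e'' h
        rw [h2, h1, Sym2.map_map]
      · simp only [hφ, Sum.elim_inr] at h
        simp at h
    · intro v h
      rcases hφ : φ.emap e with e' | v₀
      · simp only [hφ, Sum.elim_inl] at h
        have h1 := (φ.compat e).1 e' hφ
        have h2 := (ψ.compat e').2 v h
        rw [← Sym2.map_map, ← h1]
        exact h2
      · simp only [hφ, Sum.elim_inr, Sum.inr.injEq] at h
        have h1 := (φ.compat e).2 v₀ hφ
        subst h
        rw [← Sym2.map_map, h1]
        rfl
end Morphism

/-- A group of automorphisms of a multigraph `G` (a faithful action of `Γ` on `G` by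
automorphisms, i.e. a subgroup of `Aut(G)`). -/
structure GraphAction (Γ : Type) [Group Γ] (G : Multigraph) where
  actV : Γ →* Equiv.Perm G.V
  actE : Γ →* Equiv.Perm G.E
  ends_map : ∀ (γ : Γ) (e : G.E), G.ends (actE γ e) = (G.ends e).map (actV γ)
  faithful : ∀ γ : Γ, (∀ x : G.V, actV γ x = x) → (∀ e : G.E, actE γ e = e) → γ = 1

namespace GraphAction

variable {Γ : Type} [Group Γ] {G : Multigraph}

/-- Two vertices lie in the same `Δ`-orbit. -/
def vrel (A : GraphAction Γ G) (Δ : Subgroup Γ) (x y : G.V) : Prop :=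
  ∃ δ ∈ Δ, A.actV δ x = y

/-- Two edges lie in the same `Δ`-orbit. -/
def erel (A : GraphAction Γ G) (Δ : Subgroup Γ) (e f : G.E) : Prop :=
  ∃ δ ∈ Δ, A.actE δ e = f

/-- The setoid of `Δ`-orbits of vertices. -/
def vSetoid (A : GraphAction Γ G) (Δ : Subgroup Γ) : Setoid G.V where
  r := A.vrel Δ
  iseqv := by
    constructor
    · intro x; exact ⟨1, Δ.one_mem, by simp⟩
    · rintro x y ⟨δ, hδ, h⟩
      refine ⟨δ⁻¹, Δ.inv_mem hδ, ?_⟩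
      rw [map_inv, ← h]
      exact Equiv.symm_apply_apply (A.actV δ) x
    · rintro x y z ⟨δ₁, h1, e1⟩ ⟨δ₂, h2, e2⟩
      refine ⟨δ₂ * δ₁, Δ.mul_mem h2 h1, ?_⟩
      rw [map_mul]
      simp [Equiv.Perm.mul_apply, e1, e2]

/-- The setoid of `Δ`-orbits of edges. -/
def eSetoid (A : GraphAction Γ G) (Δ : Subgroup Γ) : Setoid G.E where
  r := A.erel Δ
  iseqv := by
    constructor
    · intro e; exact ⟨1, Δ.one_mem, by simp⟩
    · rintro e f ⟨δ, hδ, h⟩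
      refine ⟨δ⁻¹, Δ.inv_mem hδ, ?_⟩
      rw [map_inv, ← h]
      exact Equiv.symm_apply_apply (A.actE δ) e
    · rintro e f k ⟨δ₁, h1, e1⟩ ⟨δ₂, h2, e2⟩
      refine ⟨δ₂ * δ₁, Δ.mul_mem h2 h1, ?_⟩
      rw [map_mul]
      simp [Equiv.Perm.mul_apply, e1, e2]

/-- An edge is `Δ`-vertical if its two endpoints lie in the same `Δ`-orbit (so it is
contracted by the quotient morphism `G → G/Δ`). -/
def Vertical (A : GraphAction Γ G) (Δ : Subgroup Γ) (e : G.E) : Prop :=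
  ∃ x y : G.V, G.ends e = s(x, y) ∧ A.vrel Δ x y

/-- The vertex set of the quotient graph `G/Δ`: the `Δ`-orbits of vertices. -/
abbrev quotV (A : GraphAction Γ G) (Δ : Subgroup Γ) : Type :=
  Quotient (A.vSetoid Δ)

/-- The edge set of the quotient graph `G/Δ`: the `Δ`-orbits of non-vertical edges. -/
abbrev quotE (A : GraphAction Γ G) (Δ : Subgroup Γ) : Type :=
  Quotient ((A.eSetoid Δ).comap (Subtype.val : {e : G.E // ¬ A.Vertical Δ e} → G.E))

/-- The genus of the quotient graph `G/Δ`. -/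
noncomputable def quotGenus (A : GraphAction Γ G) (Δ : Subgroup Γ) : ℤ :=
  (Nat.card (A.quotE Δ) : ℤ) - (Nat.card (A.quotV Δ) : ℤ) + 1

/-- The order of the stabilizer `Δ_x` of a vertex `x`. -/
noncomputable def stabOrder (A : GraphAction Γ G) (Δ : Subgroup Γ) (x : G.V) : ℕ :=
  Nat.card {γ : Γ // γ ∈ Δ ∧ A.actV γ x = x}

/-- The vertical multiplicity of a vertex `x`: the number of `Δ`-vertical edges
incident to `x`. -/
noncomputable def vertMult (A : GraphAction Γ G) (Δ : Subgroup Γ) (x : G.V) : ℕ :=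
  Nat.card {e : G.E // x ∈ G.ends e ∧ A.Vertical Δ e}

/-- `r_y = |Δ_x|` for a vertex `y` of the quotient `G/Δ` and any `x` in the fiber over `y`. -/
noncomputable def r (A : GraphAction Γ G) (Δ : Subgroup Γ) (y : A.quotV Δ) : ℕ :=
  A.stabOrder Δ (Quotient.out y)

/-- `w_y = v(x)/|Δ_x|` for a vertex `y` of the quotient `G/Δ` and any `x` in the fiber. -/
noncomputable def w (A : GraphAction Γ G) (Δ : Subgroup Γ) (y : A.quotV Δ) : ℕ :=
  A.vertMult Δ (Quotient.out y) / A.r Δ y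

/-- The ramification number `R = Σ_y [2(1 - 1/r_y) + w_y]` of the quotient map `G → G/Δ`. -/
noncomputable def ram (A : GraphAction Γ G) (Δ : Subgroup Γ) : ℚ :=
  ∑ᶠ y : A.quotV Δ, (2 * (1 - 1 / (A.r Δ y : ℚ)) + (A.w Δ y : ℚ))

/-- A vertex `y` of the quotient `G/Δ` is a branch point if `2(1 - 1/r_y) + w_y > 0`. -/
def IsBranch (A : GraphAction Γ G) (Δ : Subgroup Γ) (y : A.quotV Δ) : Prop :=
  0 < 2 * (1 - 1 / (A.r Δ y : ℚ)) + (A.w Δ y : ℚ)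

/-- The quotient morphism `φ_Δ : G → G/Δ` is harmonic: for every vertex `x` of `G` and
every pair of quotient edges incident to the image of `x`, the numbers of preimages
incident to `x` agree. -/
def QuotHarmonic (A : GraphAction Γ G) (Δ : Subgroup Γ) : Prop :=
  ∀ (x : G.V) (e₁ e₂ : G.E), ¬ A.Vertical Δ e₁ → ¬ A.Vertical Δ e₂ →
    (∃ v ∈ G.ends e₁, A.vrel Δ x v) → (∃ v ∈ G.ends e₂, A.vrel Δ x v) →
    Nat.card {e : G.E // x ∈ G.ends e ∧ A.erel Δ e e₁} =
    Nat.card {e : G.E // x ∈ G.ends e ∧ A.erel Δ e e₂}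

/-- The quotient morphism `φ_Δ : G → G/Δ` is non-degenerate: no neighborhood `x(1)` is
contracted to a vertex, i.e. every vertex has a neighbor outside its `Δ`-orbit. -/
def QuotNondeg (A : GraphAction Γ G) (Δ : Subgroup Γ) : Prop :=
  ∀ x : G.V, ∃ e : G.E, x ∈ G.ends e ∧ ∃ y ∈ G.ends e, ¬ A.vrel Δ x y

/-- `Γ` acts harmonically on `G` if for every subgroup `Δ ≤ Γ` the quotient morphism
`φ_Δ : G → G/Δ` is harmonic and non-degenerate. -/
def ActsHarmonically (A : GraphAction Γ G) : Prop :=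
  ∀ Δ : Subgroup Γ, A.QuotHarmonic Δ ∧ A.QuotNondeg Δ

/-- The quotient map `G → G/Δ` is horizontally unramified: all vertex stabilizers in `Δ`
are trivial. -/
def HorizUnramified (A : GraphAction Γ G) (Δ : Subgroup Γ) : Prop :=
  ∀ (x : G.V) (γ : Γ), γ ∈ Δ → A.actV γ x = x → γ = 1

end GraphAction

/-- `M g` is the maximal order of a group acting harmonically on a graph of genus `g`. -/
noncomputable def M (g : ℕ) : ℕ :=
  sSup {n : ℕ | ∃ (Γ : Type) (i : Group Γ) (G : Multigraph) (A : @GraphAction Γ i G),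
    @GraphAction.ActsHarmonically Γ i G A ∧ G.genus = (g : ℤ) ∧ Nat.card Γ = n}

theorem Equiv.Perm.inv_apply_self {α : Type*} (f : Equiv.Perm α) (x : α) : f⁻¹ (f x) = x :=
  Equiv.symm_apply_apply f x

theorem Equiv.Perm.apply_inv_self {α : Type*} (f : Equiv.Perm α) (x : α) : f (f⁻¹ x) = x :=
  Equiv.apply_symm_apply f x

namespace GraphAction

variable {Γ : Type} [Group Γ] {G : Multigraph}

lemma vertical_of_erel (A : GraphAction Γ G) (Δ : Subgroup Γ) {e f : G.E}
    (h : A.erel Δ e f) (hv : A.Vertical Δ e) : A.Vertical Δ f := by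
  obtain ⟨τ, hτ, rfl⟩ := h
  obtain ⟨x, y, hxy, δ, hδ, hδxy⟩ := hv
  refine ⟨A.actV τ x, A.actV τ y, ?_,
    τ * δ * τ⁻¹, Δ.mul_mem (Δ.mul_mem hτ hδ) (Δ.inv_mem hτ), ?_⟩
  · rw [A.ends_map, hxy, Sym2.map_pair_eq]
  · simp only [map_mul, map_inv, Equiv.Perm.mul_apply, Equiv.Perm.inv_apply_self]
    rw [hδxy]

lemma card_fiber_eq (A : GraphAction Γ G) (Δ : Subgroup Γ) (x : G.V)
    (hfree : ∀ γ ∈ Δ, A.actV γ x = x → ∀ e : G.E, x ∈ G.ends e → A.actE γ e = e → γ = 1)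
    (e' : G.E) (hnv : ¬ A.Vertical Δ e') (hv : ∃ v ∈ G.ends e', A.vrel Δ x v) :
    Nat.card {e : G.E // x ∈ G.ends e ∧ A.erel Δ e e'} =
      Nat.card {γ : Γ // γ ∈ Δ ∧ A.actV γ x = x} := by
  obtain ⟨v, hve, δ, hδ, hδx⟩ := hv
  set e₀ : G.E := A.actE δ⁻¹ e' with he₀
  have hxe₀ : x ∈ G.ends e₀ := by
    rw [he₀, A.ends_map, Sym2.mem_map]
    refine ⟨v, hve, ?_⟩
    rw [map_inv, ← hδx, Equiv.Perm.inv_apply_self]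
  have he₀e' : A.erel Δ e₀ e' := by
    refine ⟨δ, hδ, ?_⟩
    rw [he₀, map_inv, Equiv.Perm.apply_inv_self]
  symm
  apply Nat.card_congr
  refine Equiv.ofBijective
    (fun γ => ⟨A.actE γ.1 e₀, ?_, ?_⟩) ⟨?_, ?_⟩
  · rw [A.ends_map, Sym2.mem_map]
    exact ⟨x, hxe₀, γ.2.2⟩
  · obtain ⟨γ, hγΔ, hγx⟩ := γ
    exact ⟨δ * γ⁻¹, Δ.mul_mem hδ (Δ.inv_mem hγΔ), by
      simp only [map_mul, map_inv, Equiv.Perm.mul_apply, Equiv.Perm.inv_apply_self]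
      rw [he₀, map_inv, Equiv.Perm.apply_inv_self]⟩
  · rintro ⟨γ₁, h1, hx1⟩ ⟨γ₂, h2, hx2⟩ h
    simp only [Subtype.mk.injEq] at h ⊢
    have key : γ₂⁻¹ * γ₁ = 1 := by
      refine hfree _ (Δ.mul_mem (Δ.inv_mem h2) h1) ?_ e₀ hxe₀ ?_
      · simp only [map_mul, map_inv, Equiv.Perm.mul_apply, hx1]
        rw [← hx2, Equiv.Perm.inv_apply_self, hx2]
      · simp only [map_mul, map_inv, Equiv.Perm.mul_apply, h]
        exact Equiv.Perm.inv_apply_self _ _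
    calc γ₁ = γ₂ * (γ₂⁻¹ * γ₁) := by group
    _ = γ₂ := by rw [key, mul_one]
  · rintro ⟨e, hxe, τ, hτ, hτe⟩
    -- σ sends e₀ to e
    set σ : Γ := τ⁻¹ * δ with hσ
    have hσΔ : σ ∈ Δ := Δ.mul_mem (Δ.inv_mem hτ) hδ
    have hσe₀ : A.actE σ e₀ = e := by
      simp only [hσ, he₀, map_mul, map_inv, Equiv.Perm.mul_apply,
        Equiv.Perm.apply_inv_self]
      rw [← hτe, Equiv.Perm.inv_apply_self]
    have hσx : A.actV σ x = x := by
      by_contra hne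
      apply hnv
      apply A.vertical_of_erel Δ ⟨τ, hτ, hτe⟩
      have hmem : A.actV σ x ∈ G.ends e := by
        rw [← hσe₀, A.ends_map, Sym2.mem_map]
        exact ⟨x, hxe₀, rfl⟩
      have : G.ends e = s(A.actV σ x, x) :=
        (Sym2.mem_and_mem_iff hne).mp ⟨hmem, hxe⟩
      exact ⟨A.actV σ x, x, this, σ⁻¹, Δ.inv_mem hσΔ, by
        rw [map_inv, Equiv.Perm.inv_apply_self]⟩
    exact ⟨⟨σ, hσΔ, hσx⟩, Subtype.ext hσe₀⟩

lemma quotHarmonic_of_free (A : GraphAction Γ G) (Δ : Subgroup Γ)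
    (hfree : ∀ x : G.V, ∀ γ ∈ Δ, A.actV γ x = x →
      ∀ e : G.E, x ∈ G.ends e → A.actE γ e = e → γ = 1) :
    A.QuotHarmonic Δ := by
  intro x e₁ e₂ h1 h2 hv1 hv2
  rw [A.card_fiber_eq Δ x (hfree x) e₁ h1 hv1, A.card_fiber_eq Δ x (hfree x) e₂ h2 hv2]

end GraphAction
section StarGraph

variable (Γ : Type) [Group Γ] [Finite Γ]

/-- The star tree: center `none`, leaves `some γ`, edge `γ` joins `none` and `some γ`. -/
noncomputable def starGraph : Multigraph where
  V := Option Γ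
  E := Γ
  fintypeV := @instFintypeOption Γ (Fintype.ofFinite Γ)
  fintypeE := Fintype.ofFinite Γ
  ends e := s((none : Option Γ), some e)
  loopless e := by simp [Sym2.mk_isDiag_iff]
  connected := by
    have hadj : ∀ γ : Γ, (SimpleGraph.fromRel fun x y : Option Γ =>
        ∃ e : Γ, s((none : Option Γ), some e) = s(x, y)).Adj (some γ) none := by
      intro γ
      exact ⟨by simp, Or.inr ⟨γ, rfl⟩⟩
    refine ⟨?_⟩
    intro x y
    have hr : ∀ z : Option Γ, (SimpleGraph.fromRel fun x y : Option Γ =>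
        ∃ e : Γ, s((none : Option Γ), some e) = s(x, y)).Reachable z none := by
      intro z
      cases z with
      | none => exact SimpleGraph.Reachable.refl _
      | some γ => exact (hadj γ).reachable
    exact (hr x).trans (hr y).symm

lemma starGraph_ends (e : Γ) : (starGraph Γ).ends e = s((none : Option Γ), some e) := rfl

/-- The left-regular action on the star tree. -/
noncomputable def starAction : GraphAction Γ (starGraph Γ) where
  actV := (MonoidHom.mk' (fun γ => Equiv.optionCongr (Equiv.mulLeft γ))
    (by
      intro a b
      ext x
      cases x <;> simp [mul_assoc]) : Γ →* Equiv.Perm (Option Γ))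
  actE := (MonoidHom.mk' (fun γ => Equiv.mulLeft γ)
    (by intro a b; ext x; simp [mul_assoc]) : Γ →* Equiv.Perm Γ)
  ends_map γ e := by
    show s((none : Option Γ), some (@HMul.hMul Γ Γ Γ _ γ e)) =
      Sym2.map (Equiv.optionCongr (Equiv.mulLeft γ)) s((none : Option Γ), some (show Γ from e))
    rw [Sym2.map_pair_eq]
    rfl
  faithful γ h _ := by
    have h1 : Equiv.optionCongr (Equiv.mulLeft γ) (some (1 : Γ)) = some 1 := h (some 1)
    simpa using h1

lemma starAction_actV (γ : Γ) (x : Option Γ) :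
    (starAction Γ).actV γ x = Option.map (fun a => γ * a) x := by
  cases x <;> rfl

lemma starAction_actE (γ : Γ) (e : Γ) : (starAction Γ).actE γ e = γ * e := rfl

lemma star_acts_harmonically : (starAction Γ).ActsHarmonically := by
  intro Δ
  constructor
  · apply GraphAction.quotHarmonic_of_free
    intro x γ hγ hx e he hfix
    replace hfix : @HMul.hMul Γ Γ Γ _ γ e = e := hfix
    exact mul_eq_right.mp hfix
  · intro x
    cases x with
    | none =>
      refine ⟨(1 : Γ), by show (none : Option Γ) ∈ s((none : Option Γ), some 1); simp, some 1, by show (some 1 : Option Γ) ∈ s((none : Option Γ), some 1); simp, ?_⟩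
      rintro ⟨δ, hδ, hfix⟩
      rw [starAction_actV] at hfix
      simp at hfix
    | some v =>
      refine ⟨(v : Γ), by show (some v : Option Γ) ∈ s((none : Option Γ), some v); simp, none, by show (none : Option Γ) ∈ s((none : Option Γ), some v); simp, ?_⟩
      rintro ⟨δ, hδ, hfix⟩
      rw [starAction_actV] at hfix
      simp at hfix

lemma starGraph_genus : (starGraph Γ).genus = 0 := by
  have hV : (Fintype.card (starGraph Γ).V : ℤ) = (Fintype.card (starGraph Γ).E : ℤ) + 1 := by
    rw [← Nat.card_eq_fintype_card, ← Nat.card_eq_fintype_card]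
    show ((Nat.card (Option Γ) : ℤ)) = (Nat.card Γ : ℤ) + 1
    rw [Finite.card_option]
    push_cast
    ring
  unfold Multigraph.genus
  rw [hV]
  ring

end StarGraph
section CycleGraph

set_option linter.unusedSectionVars false

open DihedralGroup

variable (n : ℕ) [NeZero n] [Fact (1 < n)]

/-- Vertices/edges of the decorated cycle: cycle part `inl i`, leaf part `inr (i, ε)`. -/
abbrev CycT := ZMod n ⊕ ZMod n × Bool

/-- Ends of edges: cycle edge `inl i` joins `inl i` to `inl (i+1)`; leaf edge `inr (i,ε)`
joins `inl i` to the leaf `inr (i,ε)`. -/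
def cycEnds : CycT n → Sym2 (CycT n)
  | .inl i => s(Sum.inl i, Sum.inl (i + 1))
  | .inr (i, ε) => s(Sum.inl i, Sum.inr (i, ε))

lemma zmod_one_ne_zero : (1 : ZMod n) ≠ 0 := one_ne_zero

/-- The `n`-cycle with two leaves attached at each vertex. -/
def cycGraph : Multigraph where
  V := CycT n
  E := CycT n
  ends := cycEnds n
  loopless e := by
    match e with
    | .inl i =>
      simp only [cycEnds, Sym2.mk_isDiag_iff, Sum.inl.injEq]
      intro h
      exact zmod_one_ne_zero n (by linear_combination -h)
    | .inr (i, ε) => simp [cycEnds]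
  connected := by
    set R := SimpleGraph.fromRel fun x y : CycT n => ∃ e : CycT n, cycEnds n e = s(x, y)
      with hR
    have h1 : ∀ i : ZMod n, R.Adj (Sum.inl i) (Sum.inl (i + 1)) := by
      intro i
      refine ⟨?_, Or.inl ⟨Sum.inl i, rfl⟩⟩
      simp only [ne_eq, Sum.inl.injEq]
      intro h
      exact zmod_one_ne_zero n (by linear_combination -h)
    have h2 : ∀ (i : ZMod n) (ε : Bool), R.Adj (Sum.inl i) (Sum.inr (i, ε)) := by
      intro i ε
      exact ⟨by simp, Or.inl ⟨Sum.inr (i, ε), rfl⟩⟩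
    have hcyc : ∀ m : ℕ, R.Reachable (Sum.inl (0 : ZMod n)) (Sum.inl (m : ZMod n)) := by
      intro m
      induction m with
      | zero =>
        rw [Nat.cast_zero]
      | succ k ih =>
        have : ((k + 1 : ℕ) : ZMod n) = (k : ZMod n) + 1 := by push_cast; ring
        rw [this]
        exact ih.trans (h1 _).reachable
    have hr : ∀ v : CycT n, R.Reachable (Sum.inl (0 : ZMod n)) v := by
      intro v
      match v with
      | .inl i =>
        have := hcyc i.val
        rwa [ZMod.natCast_zmod_val] at this
      | .inr (i, ε) =>
        have := hcyc i.val
        rw [ZMod.natCast_zmod_val] at this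
        exact this.trans (h2 i ε).reachable
    exact ⟨fun x y => (hr x).symm.trans (hr y)⟩

/-- Action of the dihedral group on vertices. -/
def dvmap : DihedralGroup n → CycT n → CycT n
  | .r k, .inl i => .inl (i + k)
  | .r k, .inr (i, ε) => .inr (i + k, ε)
  | .sr k, .inl i => .inl (-i - k)
  | .sr k, .inr (i, ε) => .inr (-i - k, !ε)

/-- Action of the dihedral group on edges. -/
def demap : DihedralGroup n → CycT n → CycT n
  | .r k, .inl i => .inl (i + k)
  | .r k, .inr (i, ε) => .inr (i + k, ε)
  | .sr k, .inl i => .inl (-i - 1 - k)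
  | .sr k, .inr (i, ε) => .inr (-i - k, !ε)

lemma dvmap_one : ∀ x, dvmap n 1 x = x := by
  intro x
  rcases x with i | ⟨i, ε⟩ <;> simp only [one_def, dvmap, add_zero]

lemma demap_one : ∀ x, demap n 1 x = x := by
  intro x
  rcases x with i | ⟨i, ε⟩ <;> simp only [one_def, demap, add_zero]

lemma dvmap_mul : ∀ a b x, dvmap n (a * b) x = dvmap n a (dvmap n b x) := by
  intro a b x
  rcases a with k | k <;> rcases b with l | l <;> rcases x with i | ⟨i, ε⟩ <;>
    simp only [r_mul_r, r_mul_sr, sr_mul_r, sr_mul_sr, dvmap, Sum.inl.injEq, Sum.inr.injEq,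
      Bool.not_not, Prod.mk.injEq, and_true, true_and] <;> ring

lemma demap_mul : ∀ a b x, demap n (a * b) x = demap n a (demap n b x) := by
  intro a b x
  rcases a with k | k <;> rcases b with l | l <;> rcases x with i | ⟨i, ε⟩ <;>
    simp only [r_mul_r, r_mul_sr, sr_mul_r, sr_mul_sr, demap, Sum.inl.injEq, Sum.inr.injEq,
      Bool.not_not, Prod.mk.injEq, and_true, true_and] <;> ring

/-- The dihedral action on the decorated cycle. -/
def cycAction : GraphAction (DihedralGroup n) (cycGraph n) where
  actV := MonoidHom.mk' (fun g =>
      ⟨dvmap n g, dvmap n g⁻¹,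
        fun x => by rw [← dvmap_mul n g⁻¹ g x, inv_mul_cancel]; exact dvmap_one n x,
        fun x => by rw [← dvmap_mul n g g⁻¹ x, mul_inv_cancel]; exact dvmap_one n x⟩)
    (fun a b => Equiv.ext fun x => by
      simp only [Equiv.Perm.mul_apply, Equiv.coe_fn_mk]
      exact dvmap_mul n a b x)
  actE := MonoidHom.mk' (fun g =>
      ⟨demap n g, demap n g⁻¹,
        fun x => by rw [← demap_mul n g⁻¹ g x, inv_mul_cancel]; exact demap_one n x,
        fun x => by rw [← demap_mul n g g⁻¹ x, mul_inv_cancel]; exact demap_one n x⟩)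
    (fun a b => Equiv.ext fun x => by
      simp only [Equiv.Perm.mul_apply, Equiv.coe_fn_mk]
      exact demap_mul n a b x)
  ends_map γ e := by
    rcases γ with k | k <;> rcases e with i | ⟨i, ε⟩
    · show cycEnds n (.inl (i + k)) = Sym2.map (dvmap n (.r k)) (cycEnds n (.inl i))
      simp only [cycEnds, Sym2.map_pair_eq]
      show s(Sum.inl (i + k), Sum.inl (i + k + 1)) = s(Sum.inl (i + k), Sum.inl (i + 1 + k))
      have : i + k + 1 = i + 1 + k := by ring
      rw [this]
    · rfl
    · show cycEnds n (.inl (-i - 1 - k)) = Sym2.map (dvmap n (.sr k)) (cycEnds n (.inl i))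
      simp only [cycEnds, Sym2.map_pair_eq]
      show s(Sum.inl (-i - 1 - k), Sum.inl (-i - 1 - k + 1)) =
        s(Sum.inl (-i - k), Sum.inl (-(i + 1) - k))
      have h1 : -i - 1 - k + 1 = -i - k := by ring
      have h2 : -(i + 1) - k = -i - 1 - k := by ring
      rw [h1, h2, Sym2.eq_swap]
    · rfl
  faithful γ h _ := by
    rcases γ with k | k
    · have hk : dvmap n (.r k) (Sum.inl 0) = Sum.inl 0 := h (Sum.inl 0)
      simp only [dvmap, zero_add, Sum.inl.injEq] at hk
      rw [one_def, hk]
    · have hk : dvmap n (.sr k) (Sum.inr (0, false)) = Sum.inr (0, false) := h (Sum.inr (0, false))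
      simp [dvmap] at hk

lemma cycAction_actV (g : DihedralGroup n) (x : CycT n) :
    (cycAction n).actV g x = dvmap n g x := rfl

lemma cycAction_actE (g : DihedralGroup n) (e : CycT n) :
    (cycAction n).actE g e = demap n g e := rfl

end CycleGraph
section CycleGraph2

set_option linter.unusedSectionVars false

open DihedralGroup

variable (n : ℕ) [NeZero n] [Fact (1 < n)]

lemma cyc_free (Δ : Subgroup (DihedralGroup n)) :
    ∀ x : (cycGraph n).V, ∀ γ ∈ Δ, (cycAction n).actV γ x = x →
      ∀ e : (cycGraph n).E, x ∈ (cycGraph n).ends e → (cycAction n).actE γ e = e → γ = 1 := by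
  intro x γ hγ hx e hxe hfix
  replace hx : dvmap n γ x = x := hx
  replace hfix : demap n γ e = e := hfix
  rcases γ with k | k
  · rcases x with i | ⟨i, ε⟩
    · have h := Sum.inl.inj hx
      have hk : k = 0 := by linear_combination h
      rw [one_def, hk]
    · have h := congrArg Prod.fst (Sum.inr.inj hx)
      have hk : k = 0 := by
        simp only at h
        linear_combination h
      rw [one_def, hk]
  · exfalso
    rcases x with i | ⟨i, ε⟩
    · have h : -i - k = i := Sum.inl.inj hx
      rcases e with j | ⟨j, η⟩
      · have hxe' : (Sum.inl i : CycT n) ∈ s(Sum.inl j, Sum.inl (j + 1)) := hxe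
        have h2 : -j - 1 - k = j := Sum.inl.inj hfix
        simp only [Sym2.mem_iff, Sum.inl.injEq] at hxe'
        rcases hxe' with rfl | rfl
        · exact zmod_one_ne_zero n (by linear_combination h - h2)
        · exact zmod_one_ne_zero n (by linear_combination h2 - h)
      · have hb := congrArg Prod.snd (Sum.inr.inj hfix)
        simp at hb
    · have hb := congrArg Prod.snd (Sum.inr.inj hx)
      simp at hb

lemma cyc_acts_harmonically : (cycAction n).ActsHarmonically := by
  intro Δ
  refine ⟨GraphAction.quotHarmonic_of_free _ _ (cyc_free n Δ), ?_⟩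
  intro x
  rcases x with i | ⟨i, ε⟩
  · refine ⟨Sum.inr (i, false), ?_, Sum.inr (i, false), ?_, ?_⟩
    · show (Sum.inl i : CycT n) ∈ s(Sum.inl i, Sum.inr (i, false))
      simp
    · show (Sum.inr (i, false) : CycT n) ∈ s(Sum.inl i, Sum.inr (i, false))
      simp
    · rintro ⟨δ, hδ, hfix⟩
      rw [cycAction_actV] at hfix
      rcases δ with k | k <;> exact Sum.inl_ne_inr hfix
  · refine ⟨Sum.inr (i, ε), ?_, Sum.inl i, ?_, ?_⟩
    · show (Sum.inr (i, ε) : CycT n) ∈ s(Sum.inl i, Sum.inr (i, ε))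
      simp
    · show (Sum.inl i : CycT n) ∈ s(Sum.inl i, Sum.inr (i, ε))
      simp
    · rintro ⟨δ, hδ, hfix⟩
      rw [cycAction_actV] at hfix
      rcases δ with k | k <;> exact Sum.inr_ne_inl hfix

lemma cyc_genus : (cycGraph n).genus = 1 := by
  show (Fintype.card (CycT n) : ℤ) - (Fintype.card (CycT n) : ℤ) + 1 = 1
  ring

end CycleGraph2

/-- There are arbitrarily large harmonic group actions in genus 0 and 1:
(a) every finite group acts harmonically on some tree; (b) for every `n ≥ 3` the dihedral
group of order `2n` acts harmonically on some graph of genus 1. -/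
theorem large_actions_low_genus :
    (∀ (Γ : Type) [Group Γ] [Finite Γ],
      ∃ (T : Multigraph) (A : GraphAction Γ T), A.ActsHarmonically ∧ T.genus = 0) ∧
    (∀ n : ℕ, 3 ≤ n →
      ∃ (G : Multigraph) (A : GraphAction (DihedralGroup n) G),
        A.ActsHarmonically ∧ G.genus = 1) := by
  constructor
  · intro Γ _ _
    exact ⟨starGraph Γ, starAction Γ, star_acts_harmonically Γ, starGraph_genus Γ⟩
  · intro n hn
    haveI : NeZero n := ⟨by omega⟩
    haveI : Fact (1 < n) := ⟨by omega⟩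
    exact ⟨cycGraph n, cycAction n, cyc_acts_harmonically n, cyc_genus n⟩
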